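/- Let c₁ and c₂ be closure operators on a complete lattice, and let c be the least closure above the supremum c₁ ⊔ c₂. Then c = c₂ ∘ c₁ if and only if c₁ ∘ c₂ ≤ c₂ ∘ c₁ pointwise. -/
import Mathlib


def IsClosure {L : Type*} [CompleteLattice L] (c : L → L) : Prop :=
  Monotone c ∧ (∀ x, x ≤ c x) ∧ (∀ x, c (c x) ≤ c x)

def IsLeastClosureAbove {L : Type*} [CompleteLattice L] (k c : L → L) : Prop :=
  IsClosure c ∧ (∀ x, k x ≤ c x) ∧
    ∀ d, IsClosure d → (∀ x, k x ≤ d x) → ∀ x, c x ≤ d x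

/-- The least closure above c₁ ⊔ c₂ equals c₂ ∘ c₁ iff c₁ ∘ c₂ ≤ c₂ ∘ c₁. -/
theorem stmt8 {L : Type*} [CompleteLattice L] (c₁ c₂ c : L → L)
    (h₁ : IsClosure c₁) (h₂ : IsClosure c₂)
    (hc : IsLeastClosureAbove (fun x => c₁ x ⊔ c₂ x) c) :
    (∀ x, c x = c₂ (c₁ x)) ↔ (∀ x, c₁ (c₂ x) ≤ c₂ (c₁ x)) := by
  obtain ⟨m₁, e₁, i₁⟩ := h₁
  obtain ⟨m₂, e₂, i₂⟩ := h₂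
  obtain ⟨⟨mc, ec, ic⟩, hk, hmin⟩ := hc
  constructor
  · intro heq x
    calc c₁ (c₂ x) ≤ c₁ (c₂ (c₁ x)) := m₁ (m₂ (e₁ x))
      _ ≤ c₂ (c₁ (c₂ (c₁ x))) := e₂ _
      _ = c (c x) := by rw [heq, heq]
      _ ≤ c x := ic x
      _ = c₂ (c₁ x) := heq x
  · intro h x
    have hcd : IsClosure (fun x => c₂ (c₁ x)) := by
      refine ⟨m₂.comp m₁, fun x => le_trans (e₁ x) (e₂ _), fun x => ?_⟩
      have : c₁ (c₂ (c₁ x)) ≤ c₂ (c₁ x) :=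
        le_trans (h (c₁ x)) (m₂ (i₁ x))
      exact le_trans (m₂ this) (i₂ _)
    have hle : ∀ y, c₁ y ⊔ c₂ y ≤ c₂ (c₁ y) := fun y =>
      sup_le (e₂ _) (m₂ (e₁ y))
    have h1 : c x ≤ c₂ (c₁ x) := hmin _ hcd hle x
    have h2 : c₂ (c₁ x) ≤ c x := by
      have hx1 : c₁ x ≤ c x := le_trans le_sup_left (hk x)
      have hx2 : c₂ (c₁ x) ≤ c (c₁ x) := le_trans le_sup_right (hk _)
      exact le_trans hx2 (le_trans (mc hx1) (ic x))
    exact le_antisymm h1 h2
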